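/- Let (G,H) be a feasible Eulerian instance with three pairs of terminals, H = (VG, {s1t1, s2t2, s3t3}), and suppose U ⊆ VG satisfies d_G(U) = d_H(U) = 2, G[U] is connected, s1, s2 ∈ U, and t1, t2, s3, t3 ∈ VG − U, with δ_G(U) = {u1v1, u2v2} where u1, u2 ∈ U and v1, v2 ∈ VG − U. Then there exist two edge-disjoint paths Q1 and Q2 in G − EG[U] (the graph obtained by deleting all edges of G[U]), where either Q1 goes from u1 to t1 and Q2 from u2 to t2, or Q1 goes from u1 to t2 and Q2 from u2 to t1. -/

import Mathlib

/-!
We encode a multigraph on vertex type `V` with edge-index type `E` by a map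
`G : E → V × V`: the edge with index `e` joins the (unordered) endpoints
`(G e).1` and `(G e).2`.
-/

/-- The degree of `v` in the multigraph `G`: the number of edge-ends of `G`
incident to `v` (a loop counts twice). -/
noncomputable def mdeg {V E : Type} (G : E → V × V) (v : V) : ℕ :=
  Set.ncard {p : E × Bool | (cond p.2 (G p.1).1 (G p.1).2) = v}

/-- `mcut G U` is `d_G(U)`: the number of edges of `G` having exactly one
endpoint in `U`. -/
noncomputable def mcut {V E : Type} (G : E → V × V) (U : Set V) : ℕ :=
  Set.ncard {e : E | ((G e).1 ∈ U ∧ (G e).2 ∉ U) ∨ ((G e).2 ∈ U ∧ (G e).1 ∉ U)}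

/-- Walks in the multigraph `G`; an edge may be traversed in either direction. -/
inductive MWalk {V E : Type} (G : E → V × V) : V → V → Type where
  | nil (v : V) : MWalk G v v
  | cons {u v w : V} (e : E) (he : G e = (u, v) ∨ G e = (v, u)) (tail : MWalk G v w) :
      MWalk G u w

namespace MWalk
/-- The list of edges traversed by a walk. -/
def edges {V E : Type} {G : E → V × V} : {u v : V} → MWalk G u v → List E
  | _, _, nil _ => []
  | _, _, cons e _ p => e :: p.edges
end MWalk

/-- An instance `(G, H)` (`H` is the demand multigraph, on the same vertex set)
is feasible if the demand edges can be routed by pairwise edge-disjoint paths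
of `G`: for each demand edge `i` there is a walk of `G` connecting its two
endpoints, the walks being pairwise edge-disjoint. -/
def MFeasible {V E E' : Type} (G : E → V × V) (H : E' → V × V) : Prop :=
  ∃ P : (i : E') → MWalk G (H i).1 (H i).2,
    ∀ i j : E', i ≠ j → List.Disjoint (P i).edges (P j).edges

/-- The multigraph `G` is connected (all of its vertex set lies in one
connected component). -/
def MConnected {V E : Type} (G : E → V × V) : Prop :=
  ∀ u v : V, Nonempty (MWalk G u v)

/-- The subgraph `G[U]` induced by `U` is connected: any two vertices of `U`
are joined by a walk all of whose edges have both endpoints in `U`. -/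
def MInducedConnected {V E : Type} (G : E → V × V) (U : Set V) : Prop :=
  ∀ u ∈ U, ∀ v ∈ U, ∃ p : MWalk G u v, ∀ e ∈ p.edges, (G e).1 ∈ U ∧ (G e).2 ∈ U

/-- The instance `(G, H)` is Eulerian: every vertex of `G + H` has even degree. -/
def MEulerian {V E E' : Type} (G : E → V × V) (H : E' → V × V) : Prop :=
  ∀ v : V, Even (mdeg G v + mdeg H v)

section Aux
variable {V E : Type} {G : E → V × V} {U : Set V}

lemma mwalk_cast_edges {u w w' : V} (h : w = w') (p : MWalk G u w) :
    (h ▸ p : MWalk G u w').edges = p.edges := by subst h; rfl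

lemma mwalk_cross : ∀ {x w : V} (p : MWalk G x w), x ∈ U → w ∉ U →
    ∃ e ∈ p.edges, ((G e).1 ∈ U ∧ (G e).2 ∉ U) ∨ ((G e).2 ∈ U ∧ (G e).1 ∉ U) := by
  intro x w p
  induction p with
  | nil v => intro hx hw; exact absurd hx hw
  | @cons a b w' e he tail ih =>
    intro hx hw
    by_cases hb : b ∈ U
    · obtain ⟨f, hf, hcut⟩ := ih hb hw
      exact ⟨f, List.mem_cons_of_mem _ hf, hcut⟩
    · refine ⟨e, List.mem_cons_self, ?_⟩
      rcases he with h | h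
      · left; rw [h]; exact ⟨hx, hb⟩
      · right; rw [h]; exact ⟨hx, hb⟩

lemma mwalk_extract {c : E} {uc vc : V}
    (hc : G c = (uc, vc) ∨ G c = (vc, uc)) (huc : uc ∈ U) (hvc : vc ∉ U) :
    ∀ {x w : V} (p : MWalk G x w), w ∉ U →
    (∀ e ∈ p.edges, (((G e).1 ∈ U ∧ (G e).2 ∉ U) ∨ ((G e).2 ∈ U ∧ (G e).1 ∉ U)) → e = c) →
    (x ∈ U → ∃ q : MWalk G uc w, (∀ e ∈ q.edges, e ∈ p.edges) ∧
        ∀ e ∈ q.edges, ¬((G e).1 ∈ U ∧ (G e).2 ∈ U)) ∧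
    (x ∉ U → ∃ q : MWalk G x w, (∀ e ∈ q.edges, e ∈ p.edges) ∧
        ∀ e ∈ q.edges, ¬((G e).1 ∈ U ∧ (G e).2 ∈ U)) := by
  intro x w p
  induction p with
  | nil v =>
    intro hw _
    refine ⟨fun hv => absurd hv hw, fun _ => ⟨MWalk.nil v, ?_, ?_⟩⟩ <;>
      simp [MWalk.edges]
  | @cons a b w' e he tail ih =>
    intro hw hcut
    have hcut' : ∀ f ∈ tail.edges,
        (((G f).1 ∈ U ∧ (G f).2 ∉ U) ∨ ((G f).2 ∈ U ∧ (G f).1 ∉ U)) → f = c :=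
      fun f hf => hcut f (List.mem_cons_of_mem _ hf)
    obtain ⟨ihU, ihO⟩ := ih hw hcut'
    have hegood : ∀ {y z : V}, G e = (y, z) ∨ G e = (z, y) → z ∉ U →
        ¬((G e).1 ∈ U ∧ (G e).2 ∈ U) := by
      intro y z h hz hUU
      rcases h with h | h <;> rw [h] at hUU
      · exact hz hUU.2
      · exact hz hUU.1
    constructor
    · intro ha
      by_cases hb : b ∈ U
      · obtain ⟨q, hq1, hq2⟩ := ihU hb
        exact ⟨q, fun f hf => List.mem_cons_of_mem _ (hq1 f hf), hq2⟩
      · have hec : e = c := by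
          refine hcut e (List.mem_cons_self) ?_
          rcases he with h | h
          · left; rw [h]; exact ⟨ha, hb⟩
          · right; rw [h]; exact ⟨ha, hb⟩
        subst hec
        have hab : a = uc ∧ b = vc := by
          rcases he with h | h <;> rcases hc with h' | h' <;> rw [h] at h' <;>
            rw [Prod.mk.injEq] at h'
          · exact ⟨h'.1, h'.2⟩
          · exact absurd (h'.1 ▸ ha) hvc
          · exact absurd (h'.1 ▸ hb) (by simp [huc])
          · exact ⟨h'.2, h'.1⟩
        obtain ⟨h1, h2⟩ := hab
        subst h1; subst h2
        obtain ⟨q, hq1, hq2⟩ := ihO hb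
        refine ⟨MWalk.cons e he q, ?_, ?_⟩
        · intro f hf
          rcases List.mem_cons.1 hf with h | h
          · exact h ▸ List.mem_cons_self
          · exact List.mem_cons_of_mem _ (hq1 f h)
        · intro f hf
          rcases List.mem_cons.1 hf with h | h
          · subst h; exact hegood he hvc
          · exact hq2 f h
    · intro ha
      by_cases hb : b ∈ U
      · have hec : e = c := by
          refine hcut e (List.mem_cons_self) ?_
          rcases he with h | h
          · right; rw [h]; exact ⟨hb, ha⟩
          · left; rw [h]; exact ⟨hb, ha⟩
        subst hec
        have hab : a = vc ∧ b = uc := by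
          rcases he with h | h <;> rcases hc with h' | h' <;> rw [h] at h' <;>
            rw [Prod.mk.injEq] at h'
          · exact absurd (h'.1 ▸ huc) (by simp [ha])
          · exact ⟨h'.1, h'.2⟩
          · exact ⟨h'.2, h'.1⟩
          · exact absurd (h'.2 ▸ huc) (by simp [ha])
        obtain ⟨h1, h2⟩ := hab
        subst h1; subst h2
        obtain ⟨q, hq1, hq2⟩ := ihU hb
        refine ⟨MWalk.cons e he q, ?_, ?_⟩
        · intro f hf
          rcases List.mem_cons.1 hf with h | h
          · exact h ▸ List.mem_cons_self
          · exact List.mem_cons_of_mem _ (hq1 f h)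
        · intro f hf
          rcases List.mem_cons.1 hf with h | h
          · subst h
            intro hUU
            rcases he with h | h <;> rw [h] at hUU
            · exact ha hUU.1
            · exact ha hUU.2
          · exact hq2 f h
      · obtain ⟨q, hq1, hq2⟩ := ihO hb
        refine ⟨MWalk.cons e he q, ?_, ?_⟩
        · intro f hf
          rcases List.mem_cons.1 hf with h | h
          · exact h ▸ List.mem_cons_self
          · exact List.mem_cons_of_mem _ (hq1 f h)
        · intro f hf
          rcases List.mem_cons.1 hf with h | h
          · subst h; exact hegood he hb
          · exact hq2 f h

end Aux

/-- Let `(G, H)` be a feasible Eulerian instance with three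
pairs of terminals and let `U ⊆ VG` satisfy `d_G(U) = d_H(U) = 2`, `G[U]`
connected, `s₁, s₂ ∈ U`, `t₁, t₂, s₃, t₃ ∈ VG − U`, and
`δ_G(U) = {u₁v₁, u₂v₂}` with `u₁, u₂ ∈ U`, `v₁, v₂ ∉ U`. Then there are two
edge-disjoint paths `Q₁`, `Q₂` in `G − EG[U]` (using no edge with both
endpoints in `U`) such that either `Q₁ : u₁–t₁` and `Q₂ : u₂–t₂`, or
`Q₁ : u₁–t₂` and `Q₂ : u₂–t₁`. -/
theorem statement18 {V E : Type} [Fintype E]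
    (G : E → V × V) (s1 t1 s2 t2 s3 t3 : V)
    (H : Fin 3 → V × V) (hH : H = ![(s1, t1), (s2, t2), (s3, t3)])
    (euler : MEulerian G H)
    (hfeas : MFeasible G H)
    (U : Set V) (hUG : mcut G U = 2) (hUH : mcut H U = 2)
    (hUconn : MInducedConnected G U)
    (hs1 : s1 ∈ U) (hs2 : s2 ∈ U)
    (ht1 : t1 ∉ U) (ht2 : t2 ∉ U) (hs3 : s3 ∉ U) (ht3 : t3 ∉ U)
    (e1 e2 : E) (u1 v1 u2 v2 : V) (hne : e1 ≠ e2)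
    (he1 : G e1 = (u1, v1) ∨ G e1 = (v1, u1)) (hu1 : u1 ∈ U) (hv1 : v1 ∉ U)
    (he2 : G e2 = (u2, v2) ∨ G e2 = (v2, u2)) (hu2 : u2 ∈ U) (hv2 : v2 ∉ U)
    (hdelta : ∀ e : E,
      (((G e).1 ∈ U ∧ (G e).2 ∉ U) ∨ ((G e).2 ∈ U ∧ (G e).1 ∉ U)) → e = e1 ∨ e = e2) :
    (∃ (Q1 : MWalk G u1 t1) (Q2 : MWalk G u2 t2),
        (∀ e ∈ Q1.edges, ¬((G e).1 ∈ U ∧ (G e).2 ∈ U)) ∧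
        (∀ e ∈ Q2.edges, ¬((G e).1 ∈ U ∧ (G e).2 ∈ U)) ∧
        Q1.edges.Disjoint Q2.edges) ∨
    (∃ (Q1 : MWalk G u1 t2) (Q2 : MWalk G u2 t1),
        (∀ e ∈ Q1.edges, ¬((G e).1 ∈ U ∧ (G e).2 ∈ U)) ∧
        (∀ e ∈ Q2.edges, ¬((G e).1 ∈ U ∧ (G e).2 ∈ U)) ∧
        Q1.edges.Disjoint Q2.edges) := by
  
  obtain ⟨P, hdisj⟩ := hfeas
  have h0 : H 0 = (s1, t1) := by simp [hH]
  have h1 : H 1 = (s2, t2) := by simp [hH]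
  have hs0 : (H 0).1 ∈ U := by rw [h0]; exact hs1
  have ht0 : (H 0).2 ∉ U := by rw [h0]; exact ht1
  have hs1' : (H 1).1 ∈ U := by rw [h1]; exact hs2
  have ht1' : (H 1).2 ∉ U := by rw [h1]; exact ht2
  have d01 : List.Disjoint (P 0).edges (P 1).edges := hdisj 0 1 (by decide)
  have et0 : (H 0).2 = t1 := by rw [h0]
  have et1 : (H 1).2 = t2 := by rw [h1]
  obtain ⟨f, hfP, hfcut⟩ := mwalk_cross (P 0) hs0 ht0
  obtain ⟨g, hgP, hgcut⟩ := mwalk_cross (P 1) hs1' ht1'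
  rcases hdelta f hfcut with hfe | hfe <;> rw [hfe] at hfP <;> clear hfe hfcut
  · -- P 0 uses e1
    have hgP2 : e2 ∈ (MWalk.edges (P 1)) := by
      rcases hdelta g hgcut with hge | hge <;> rw [hge] at hgP
      · exact (d01 hfP hgP).elim
      · exact hgP
    clear hgP hgcut
    have hc0 : ∀ e ∈ (P 0).edges,
        (((G e).1 ∈ U ∧ (G e).2 ∉ U) ∨ ((G e).2 ∈ U ∧ (G e).1 ∉ U)) → e = e1 := by
      intro e heP hcut
      rcases hdelta e hcut with rfl | rfl
      · rfl
      · exact (d01 heP hgP2).elim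
    have hc1 : ∀ e ∈ (P 1).edges,
        (((G e).1 ∈ U ∧ (G e).2 ∉ U) ∨ ((G e).2 ∈ U ∧ (G e).1 ∉ U)) → e = e2 := by
      intro e heP hcut
      rcases hdelta e hcut with rfl | rfl
      · exact (d01 hfP heP).elim
      · rfl
    obtain ⟨q1, hq1sub, hq1good⟩ := (mwalk_extract he1 hu1 hv1 (P 0) ht0 hc0).1 hs0
    obtain ⟨q2, hq2sub, hq2good⟩ := (mwalk_extract he2 hu2 hv2 (P 1) ht1' hc1).1 hs1'
    refine Or.inl ⟨et0 ▸ q1, et1 ▸ q2, ?_, ?_, ?_⟩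
    · rw [mwalk_cast_edges]; exact hq1good
    · rw [mwalk_cast_edges]; exact hq2good
    · intro a ha hb
      rw [mwalk_cast_edges] at ha hb
      exact d01 (hq1sub a ha) (hq2sub a hb)
  · -- P 0 uses e2
    have hgP2 : e1 ∈ (MWalk.edges (P 1)) := by
      rcases hdelta g hgcut with hge | hge <;> rw [hge] at hgP
      · exact hgP
      · exact (d01 hfP hgP).elim
    clear hgP hgcut
    have hc0 : ∀ e ∈ (P 0).edges,
        (((G e).1 ∈ U ∧ (G e).2 ∉ U) ∨ ((G e).2 ∈ U ∧ (G e).1 ∉ U)) → e = e2 := by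
      intro e heP hcut
      rcases hdelta e hcut with rfl | rfl
      · exact (d01 heP hgP2).elim
      · rfl
    have hc1 : ∀ e ∈ (P 1).edges,
        (((G e).1 ∈ U ∧ (G e).2 ∉ U) ∨ ((G e).2 ∈ U ∧ (G e).1 ∉ U)) → e = e1 := by
      intro e heP hcut
      rcases hdelta e hcut with rfl | rfl
      · rfl
      · exact (d01 hfP heP).elim
    obtain ⟨q2, hq2sub, hq2good⟩ := (mwalk_extract he2 hu2 hv2 (P 0) ht0 hc0).1 hs0
    obtain ⟨q1, hq1sub, hq1good⟩ := (mwalk_extract he1 hu1 hv1 (P 1) ht1' hc1).1 hs1'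
    refine Or.inr ⟨et1 ▸ q1, et0 ▸ q2, ?_, ?_, ?_⟩
    · rw [mwalk_cast_edges]; exact hq1good
    · rw [mwalk_cast_edges]; exact hq2good
    · intro a ha hb
      rw [mwalk_cast_edges] at ha hb
      exact d01 (hq2sub a hb) (hq1sub a ha)
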